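/- Let $r \geq 1$, let $A$ be a real symmetric positive definite $r \times r$ matrix, and define $\phi : (0,1)^r \to \mathbb{R}^r$ by $\phi_i(x) = \sum_j A_{ij} \log x_j - \log(1-x_i)$. Then $\phi$ is a proper map: the preimage under $\phi$ of any compact subset of $\mathbb{R}^r$ is compact in $(0,1)^r$. -/

import Mathlib

open Real Finset


open Real Finset

lemma log_mul_log_le_aux {x : ℝ} (h0 : 0 < x) (h2 : x ≤ 1/2) :
    Real.log x * Real.log (1 - x) ≤ 2 := by
  have h1 : x < 1 := by linarith
  have hx1 : (0:ℝ) < 1 - x := by linarith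
  have ha : 0 ≤ -Real.log x := by
    have := Real.log_nonpos h0.le h1.le; linarith
  have hb : 0 ≤ -Real.log (1 - x) := by
    have := Real.log_nonpos hx1.le (by linarith); linarith
  have hA : -Real.log x ≤ x⁻¹ := by
    rw [← Real.log_inv]
    have := Real.log_le_sub_one_of_pos (inv_pos.mpr h0)
    have hxi : (1:ℝ) ≤ x⁻¹ := (one_le_inv_iff₀).mpr ⟨h0, h1.le⟩
    linarith
  have hB : -Real.log (1 - x) ≤ 2 * x := by
    rw [← Real.log_inv]
    have h := Real.log_le_sub_one_of_pos (inv_pos.mpr hx1)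
    have : (1 - x)⁻¹ - 1 = x / (1 - x) := by field_simp; ring
    have hdiv : x / (1 - x) ≤ 2 * x := by
      rw [div_le_iff₀ hx1]; nlinarith
    linarith
  have := mul_le_mul hA hB hb (by positivity)
  have hxx : x⁻¹ * (2 * x) = 2 := by field_simp
  nlinarith

lemma log_mul_log_le {x : ℝ} (h0 : 0 < x) (h1 : x < 1) :
    Real.log x * Real.log (1 - x) ≤ 2 := by
  rcases le_or_gt x (1/2) with h | h
  · exact log_mul_log_le_aux h0 h
  · have := log_mul_log_le_aux (x := 1 - x) (by linarith) (by linarith)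
    have hxx : 1 - (1 - x) = x := by ring
    rw [hxx] at this
    linarith [this, mul_comm (Real.log x) (Real.log (1 - x))]

open Real Finset

lemma posdef_coercive {r : ℕ} (hr : 1 ≤ r) {A : Matrix (Fin r) (Fin r) ℝ}
    (hA : A.PosDef) :
    ∃ lam > (0:ℝ), ∀ u : Fin r → ℝ,
      lam * ∑ i, (u i)^2 ≤ ∑ i, u i * ∑ j, A i j * u j := by
  set Q : (Fin r → ℝ) → ℝ := fun u => ∑ i, u i * ∑ j, A i j * u j with hQ
  have hQpos : ∀ u : Fin r → ℝ, u ≠ 0 → 0 < Q u := by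
    intro u hu
    have := hA.dotProduct_mulVec_pos hu
    simpa [hQ, dotProduct, Matrix.mulVec, Finset.mul_sum] using this
  have hQcont : Continuous Q := by
    apply continuous_finset_sum
    intro i _
    exact (continuous_apply i).mul
      (continuous_finset_sum _ fun j _ => continuous_const.mul (continuous_apply j))
  set S₁ : Set (Fin r → ℝ) := {u | ∑ i, (u i)^2 = 1} with hS₁
  have hS₁closed : IsClosed S₁ :=
    isClosed_eq (continuous_finset_sum _ fun i _ => (continuous_apply i).pow 2)
      continuous_const
  have hS₁sub : S₁ ⊆ Metric.closedBall 0 1 := by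
    intro u hu
    rw [Metric.mem_closedBall, dist_zero_right]
    refine pi_norm_le_iff_of_nonneg zero_le_one |>.mpr fun i => ?_
    rw [Real.norm_eq_abs, ← Real.sqrt_one, ← Real.sqrt_sq_eq_abs]
    refine Real.sqrt_le_sqrt ?_
    rw [← hu]
    exact Finset.single_le_sum (fun j _ => sq_nonneg (u j)) (Finset.mem_univ i)
  have hS₁comp : IsCompact S₁ :=
    (isCompact_closedBall _ _).of_isClosed_subset hS₁closed hS₁sub
  have hS₁ne : S₁.Nonempty := by
    refine ⟨Pi.single ⟨0, hr⟩ 1, ?_⟩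
    simp only [hS₁, Set.mem_setOf_eq]
    rw [Finset.sum_eq_single (⟨0, hr⟩ : Fin r)]
    · simp
    · intro j _ hj; simp [Pi.single_apply, hj]
    · simp
  obtain ⟨u₀, hu₀S, hmin⟩ := hS₁comp.exists_isMinOn hS₁ne hQcont.continuousOn
  have hu₀ne : u₀ ≠ 0 := by
    intro h
    rw [hS₁] at hu₀S
    simp only [Set.mem_setOf_eq, h] at hu₀S
    simp at hu₀S
  refine ⟨Q u₀, hQpos u₀ hu₀ne, fun u => ?_⟩
  by_cases hu : u = 0
  · simp [hu, hQ]
  · have hSpos : 0 < ∑ i, (u i)^2 := by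
      obtain ⟨i, hi⟩ := Function.ne_iff.mp hu
      have : 0 < (u i)^2 := by exact pow_pos (abs_pos.mpr hi) 2 |>.trans_eq (sq_abs _)
      refine lt_of_lt_of_le this ?_
      exact Finset.single_le_sum (fun j _ => sq_nonneg (u j)) (Finset.mem_univ i)
    set s : ℝ := Real.sqrt (∑ i, (u i)^2) with hs
    have hspos : 0 < s := Real.sqrt_pos.mpr hSpos
    have hs2 : s^2 = ∑ i, (u i)^2 := Real.sq_sqrt hSpos.le
    set w : Fin r → ℝ := fun i => s⁻¹ * u i with hw
    have hwS : w ∈ S₁ := by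
      simp only [hS₁, Set.mem_setOf_eq, hw, mul_pow, ← Finset.mul_sum]
      rw [← hs2]
      field_simp
    have hQw : Q w = (s⁻¹)^2 * Q u := by
      simp only [hQ, hw]
      rw [Finset.mul_sum]
      refine Finset.sum_congr rfl fun i _ => ?_
      have h1 : ∑ j, A i j * (s⁻¹ * u j) = s⁻¹ * ∑ j, A i j * u j := by
        rw [Finset.mul_sum]; exact Finset.sum_congr rfl fun j _ => by ring
      rw [h1]; ring
    have hle : Q u₀ ≤ Q w := hmin hwS
    rw [hQw] at hle
    have h2 : (s⁻¹)^2 = (∑ i, (u i)^2)⁻¹ := by rw [← hs2]; simp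
    rw [h2] at hle
    calc Q u₀ * ∑ i, (u i)^2 = (∑ i, (u i)^2) * Q u₀ := by ring
      _ ≤ (∑ i, (u i)^2) * ((∑ i, (u i)^2)⁻¹ * Q u) :=
          mul_le_mul_of_nonneg_left hle hSpos.le
      _ = Q u := by field_simp

/-- Properness of Zagier's map `φ : (0,1)^r → ℝ^r`,
`φ_i(x) = ∑_j A_{ij} log x_j - log(1-x_i)`: the preimage of any compact set is
compact. -/
theorem zagier_map_proper (r : ℕ) (hr : 1 ≤ r)
    (A : Matrix (Fin r) (Fin r) ℝ) (hA : A.PosDef) (hAsymm : A.IsSymm) :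
    let φ : (Fin r → ℝ) → (Fin r → ℝ) := fun x i =>
      ∑ j, A i j * Real.log (x j) - Real.log (1 - x i)
    ∀ K : Set (Fin r → ℝ), IsCompact K →
      IsCompact {x : Fin r → ℝ | (∀ i, x i ∈ Set.Ioo (0 : ℝ) 1) ∧ φ x ∈ K} := by
  intro φ K hK
  have hφdef : φ = fun x i => ∑ j, A i j * Real.log (x j) - Real.log (1 - x i) := rfl
  obtain ⟨lam, hlam, hcoer⟩ := posdef_coercive hr hA
  -- bound on K
  obtain ⟨C, hC⟩ := hK.isBounded.exists_norm_le
  set M : ℝ := max C 0 with hM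
  have hM0 : 0 ≤ M := le_max_right _ _
  have hKM : ∀ y ∈ K, ∀ i, |y i| ≤ M := by
    intro y hy i
    calc |y i| = ‖y i‖ := (Real.norm_eq_abs _).symm
      _ ≤ ‖y‖ := norm_le_pi_norm y i
      _ ≤ C := hC y hy
      _ ≤ M := le_max_left _ _
  set B : ℝ := max 1 ((M * r + 2 * r) / lam) with hB
  have hB1 : (1:ℝ) ≤ B := le_max_left _ _
  have hB0 : (0:ℝ) ≤ B := by linarith
  set Cm : ℝ := ∑ i, ∑ j, |A i j| with hCm
  have hCmrow : ∀ i : Fin r, ∑ j, |A i j| ≤ Cm := by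
    intro i
    exact Finset.single_le_sum (f := fun k => ∑ j, |A k j|)
      (fun k _ => Finset.sum_nonneg fun j _ => abs_nonneg _) (Finset.mem_univ i)
  set B' : ℝ := M + Cm * B with hB'
  set ε : ℝ := Real.exp (-B) with hε
  set ε' : ℝ := Real.exp (-B') with hε'
  have hεpos : 0 < ε := Real.exp_pos _
  have hε'pos : 0 < ε' := Real.exp_pos _
  set T : Set (Fin r → ℝ) := Set.pi Set.univ (fun _ => Set.Icc ε (1 - ε')) with hT
  -- the key set equality
  have hset : {x : Fin r → ℝ | (∀ i, x i ∈ Set.Ioo (0 : ℝ) 1) ∧ φ x ∈ K}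
      = T ∩ φ ⁻¹' K := by
    ext x
    simp only [Set.mem_setOf_eq, Set.mem_inter_iff, Set.mem_preimage, hT,
      Set.mem_pi, Set.mem_univ, forall_true_left, Set.mem_Icc, Set.mem_Ioo]
    constructor
    · rintro ⟨hx, hφx⟩
      refine ⟨fun i => ?_, hφx⟩
      have hφM : ∀ i, |φ x i| ≤ M := hKM _ hφx
      set u : Fin r → ℝ := fun i => Real.log (x i) with hu
      set s : ℝ := Real.sqrt (∑ i, (u i)^2) with hs
      have hs0 : 0 ≤ s := Real.sqrt_nonneg _
      have hui : ∀ i, |u i| ≤ s := by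
        intro i
        rw [← Real.sqrt_sq_eq_abs]
        exact Real.sqrt_le_sqrt
          (Finset.single_le_sum (fun j _ => sq_nonneg (u j)) (Finset.mem_univ i))
      -- key identity
      have hid : ∑ i, u i * ∑ j, A i j * u j
          = ∑ i, u i * φ x i + ∑ i, u i * Real.log (1 - x i) := by
        rw [← Finset.sum_add_distrib]
        refine Finset.sum_congr rfl fun k _ => ?_
        rw [hφdef]
        ring
      have hterm : ∀ k : Fin r, u k * Real.log (1 - x k) ≤ 2 := fun k =>
        log_mul_log_le (hx k).1 (hx k).2
      have hterm2 : ∀ k : Fin r, u k * φ x k ≤ s * M := by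
        intro k
        calc u k * φ x k ≤ |u k * φ x k| := le_abs_self _
          _ = |u k| * |φ x k| := abs_mul _ _
          _ ≤ s * M := mul_le_mul (hui k) (hφM k) (abs_nonneg _) hs0
      have hQle : ∑ i, u i * ∑ j, A i j * u j ≤ r * (s * M) + r * 2 := by
        rw [hid]
        have h1 : ∑ i, u i * φ x i ≤ ∑ _i : Fin r, s * M :=
          Finset.sum_le_sum fun k _ => hterm2 k
        have h2 : ∑ i, u i * Real.log (1 - x i) ≤ ∑ _i : Fin r, (2:ℝ) :=
          Finset.sum_le_sum fun k _ => hterm k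
        simp only [Finset.sum_const, Finset.card_univ, Fintype.card_fin,
          nsmul_eq_mul] at h1 h2
        linarith
      have hkey : lam * s^2 ≤ r * (s * M) + r * 2 := by
        have := hcoer u
        rw [Real.sq_sqrt (Finset.sum_nonneg fun i _ => sq_nonneg (u i))]
        linarith
      have hsB : s ≤ B := by
        by_cases hs1 : s ≤ 1
        · exact hs1.trans hB1
        · push_neg at hs1
          have hslam : s * lam ≤ M * r + 2 * r := by
            nlinarith [hkey, mul_pos hlam (lt_trans one_pos hs1)]
          have : s ≤ (M * r + 2 * r) / lam := by
            rw [le_div_iff₀ hlam]; linarith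
          exact this.trans (le_max_right _ _)
      -- lower bound on x i
      have hxlb : ε ≤ x i := by
        have h1 : -B ≤ u i := by
          have := (abs_le.mp ((hui i).trans hsB)).1
          linarith
        calc ε = Real.exp (-B) := rfl
          _ ≤ Real.exp (u i) := Real.exp_le_exp.mpr h1
          _ = x i := by rw [hu]; exact Real.exp_log (hx i).1
      refine ⟨hxlb, ?_⟩
      -- upper bound on x i
      have hrow : -(Cm * B) ≤ ∑ j, A i j * u j := by
        have h1 : ∀ j : Fin r, -( |A i j| * B) ≤ A i j * u j := by
          intro j
          have h2 : |A i j * u j| ≤ |A i j| * B := by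
            rw [abs_mul]
            exact mul_le_mul_of_nonneg_left ((hui j).trans hsB) (abs_nonneg _)
          linarith [(abs_le.mp h2).1]
        calc -(Cm * B) ≤ -((∑ j, |A i j|) * B) := by
              have := hCmrow i
              nlinarith
          _ = ∑ j, -(|A i j| * B) := by rw [Finset.sum_mul, ← Finset.sum_neg_distrib]
          _ ≤ ∑ j, A i j * u j := Finset.sum_le_sum fun j _ => h1 j
      have hlog1x : -B' ≤ Real.log (1 - x i) := by
        have heq : Real.log (1 - x i) = (∑ j, A i j * u j) - φ x i := by
          rw [hφdef]; simp [hu]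
        have := (abs_le.mp (hφM i)).2
        rw [heq, hB']
        linarith
      have : ε' ≤ 1 - x i := by
        calc ε' = Real.exp (-B') := rfl
          _ ≤ Real.exp (Real.log (1 - x i)) := Real.exp_le_exp.mpr hlog1x
          _ = 1 - x i := Real.exp_log (by linarith [(hx i).2])
      linarith
    · rintro ⟨hx, hφx⟩
      refine ⟨fun i => ⟨lt_of_lt_of_le hεpos (hx i).1, ?_⟩, hφx⟩
      have := (hx i).2
      linarith
  rw [hset]
  have hTcomp : IsCompact T := isCompact_univ_pi fun _ => isCompact_Icc
  have hTclosed : IsClosed T := isClosed_set_pi fun _ _ => isClosed_Icc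
  have hφcont : ContinuousOn φ T := by
    rw [hφdef]
    refine continuousOn_pi.mpr fun i => ?_
    refine ContinuousOn.sub ?_ ?_
    · refine continuousOn_finset_sum _ fun j _ => ?_
      refine continuousOn_const.mul ?_
      refine Real.continuousOn_log.comp (continuous_apply j).continuousOn ?_
      intro x hxT
      have := (hxT j (Set.mem_univ j)).1
      simp only [Set.mem_compl_iff, Set.mem_singleton_iff]
      intro h
      rw [h] at this
      linarith
    · refine Real.continuousOn_log.comp (continuousOn_const.sub (continuous_apply i).continuousOn) ?_
      intro x hxT
      have := (hxT i (Set.mem_univ i)).2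
      simp only [Set.mem_compl_iff, Set.mem_singleton_iff]
      intro h
      have h2 : x i = 1 := by linarith [sub_eq_zero.mp h]
      linarith
  exact hTcomp.of_isClosed_subset
    (hφcont.preimage_isClosed_of_isClosed hTclosed hK.isClosed)
    Set.inter_subset_left
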